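/- Let F be a filter on ω extending the Fréchet filter. Then F is a non-meager P-filter if and only if every F-tree of finite sets has a branch whose union belongs to F. -/

import Mathlib

open Set

/-- A point of the Cantor space `α → Bool`, viewed as a subset of `α`
(the identification of `2^ω` with `𝒫(ω)` via characteristic functions). -/
def toSet {α : Type*} (x : α → Bool) : Set α := {a | x a = true}

/-- The copy of a family `F ⊆ 𝒫(α)` inside the Cantor space `α → Bool`. -/
def cantorCopy {α : Type*} (F : Set (Set α)) : Set (α → Bool) := toSet ⁻¹' F

/-- `F` is a filter on `α`: contains the whole set, not `∅`, closed under
finite intersections and supersets. -/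
def IsFilterOn {α : Type*} (F : Set (Set α)) : Prop :=
  Set.univ ∈ F ∧ ∅ ∉ F ∧ (∀ A B : Set α, A ∈ F → B ∈ F → A ∩ B ∈ F) ∧
    ∀ A B : Set α, A ∈ F → A ⊆ B → B ∈ F

/-- `F` extends the Fréchet filter: every cofinite set belongs to `F`. -/
def ExtendsFrechet {α : Type*} (F : Set (Set α)) : Prop :=
  ∀ A : Set α, Aᶜ.Finite → A ∈ F

/-- `F` is a P-filter: every countable subfamily has a pseudo-intersection in `F`. -/
def IsPFilterOn {α : Type*} (F : Set (Set α)) : Prop :=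
  ∀ X : ℕ → Set α, (∀ n, X n ∈ F) → ∃ Y ∈ F, ∀ n, (Y \ X n).Finite

/-- `F` is non-meager as a subset of the Cantor space `α → Bool`. -/
def NonMeagerFamily {α : Type*} (F : Set (Set α)) : Prop :=
  ¬ IsMeagre (cantorCopy F)

/-- `I` is an ideal on `α`: contains `∅`, not the whole set, closed under
finite unions and subsets. -/
def IsIdealOn {α : Type*} (I : Set (Set α)) : Prop :=
  ∅ ∈ I ∧ Set.univ ∉ I ∧ (∀ A B : Set α, A ∈ I → B ∈ I → A ∪ B ∈ I) ∧
    ∀ A B : Set α, A ∈ I → B ⊆ A → B ∈ I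

/-- `I` contains all finite sets. -/
def ContainsFinites {α : Type*} (I : Set (Set α)) : Prop :=
  ∀ A : Set α, A.Finite → A ∈ I

/-- `I` is a P-ideal: every countable subfamily has a member of `I`
almost containing each of them. -/
def IsPIdealOn {α : Type*} (I : Set (Set α)) : Prop :=
  ∀ X : ℕ → Set α, (∀ n, X n ∈ I) → ∃ Y ∈ I, ∀ n, (X n \ Y).Finite

/-- A topological space is countable dense homogeneous. -/
def CDH (X : Type*) [TopologicalSpace X] : Prop :=
  ∀ D E : Set X, D.Countable → Dense D → E.Countable → Dense E →
    ∃ h : X ≃ₜ X, h '' D = E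

/-- `D` is a (set-theoretic) subfamily of `F` that is dense in `F` with respect to
the subspace topology `F` inherits from the Cantor space. -/
def DenseIn {α : Type*} (D F : Set (Set α)) : Prop :=
  D ⊆ F ∧ cantorCopy F ⊆ closure (cantorCopy D)

/-- A tree of finite sequences of finite subsets of `ω`: nonempty (contains the empty
sequence) and closed under initial segments. -/
def IsTree (T : Set (List (Finset ℕ))) : Prop :=
  [] ∈ T ∧ ∀ s ∈ T, ∀ t : List (Finset ℕ), t <+: s → t ∈ T

/-- `T` is an `F`-tree of finite sets: each node has a witness `X ∈ F` all of whose
finite subsets give immediate successors in `T`. -/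
def IsFTree (F : Set (Set ℕ)) (T : Set (List (Finset ℕ))) : Prop :=
  ∀ s ∈ T, ∃ X ∈ F, ∀ a : Finset ℕ, ↑a ⊆ X → s ++ [a] ∈ T

lemma cyl_isOpen (σ : ℕ → Bool) (n : ℕ) : IsOpen {x : ℕ → Bool | ∀ i < n, x i = σ i} := by
  have : {x : ℕ → Bool | ∀ i < n, x i = σ i} = ⋂ i ∈ Finset.range n, (fun x : ℕ → Bool => x i) ⁻¹' {σ i} := by
    ext x; simp [Set.mem_iInter]
  rw [this]
  exact isOpen_biInter_finset fun i _ => (continuous_apply i).isOpen_preimage _ (isOpen_discrete _)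

lemma exists_cyl_subset {U : Set (ℕ → Bool)} (hU : IsOpen U) {x : ℕ → Bool} (hx : x ∈ U) :
    ∃ n, {y : ℕ → Bool | ∀ i < n, y i = x i} ⊆ U := by
  rcases isOpen_pi_iff.1 hU x hx with ⟨I, u, hI, hsub⟩
  rcases I.exists_le with ⟨n, hn⟩
  refine ⟨n + 1, fun y hy => hsub ?_⟩
  intro i hi
  have := hy i (Nat.lt_succ_of_le (hn i hi))
  rw [this]
  exact (hI i hi).2

lemma nwd_ext {M : Set (ℕ → Bool)} (hM : IsClosed M) (hnwd : interior M = ∅)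
    (σ : ℕ → Bool) (n : ℕ) :
    ∃ m, n < m ∧ ∃ τ : ℕ → Bool, (∀ i < n, τ i = σ i) ∧
      ∀ y : ℕ → Bool, (∀ i < m, y i = τ i) → y ∉ M := by
  have hd : Dense Mᶜ := by
    rw [← interior_eq_empty_iff_dense_compl]; exact hnwd
  obtain ⟨x, hx1, hx2⟩ := hd.inter_open_nonempty _ (cyl_isOpen σ n) ⟨σ, fun i _ => rfl⟩
  obtain ⟨m', hm'⟩ := exists_cyl_subset hM.isOpen_compl hx2
  refine ⟨max m' (n + 1), lt_of_lt_of_le (Nat.lt_succ_self n) (le_max_right _ _), x, hx1, ?_⟩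
  intro y hy
  exact hm' fun i hi => hy i (lt_of_lt_of_le hi (le_max_left _ _))

lemma nwd_ext_all {M : Set (ℕ → Bool)} (hM : IsClosed M) (hnwd : interior M = ∅) (n : ℕ) :
    ∃ m, n < m ∧ ∀ σ : ℕ → Bool, ∃ τ : ℕ → Bool, (∀ i < n, τ i = σ i) ∧
      ∀ y : ℕ → Bool, (∀ i < m, y i = τ i) → y ∉ M := by
  have h := fun ρ : Fin n → Bool =>
    nwd_ext hM hnwd (fun i => if h : i < n then ρ ⟨i, h⟩ else false) n
  choose m hm τ hτ1 hτ2 using h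
  refine ⟨(n + 1) + Finset.univ.sup m, by omega, ?_⟩
  intro σ
  set ρ : Fin n → Bool := fun i => σ i.1 with hρ
  refine ⟨τ ρ, ?_, ?_⟩
  · intro i hi
    have := hτ1 ρ i hi
    simpa [hi] using this
  · intro y hy
    refine hτ2 ρ y fun i hi => hy i ?_
    have : m ρ ≤ Finset.univ.sup m := Finset.le_sup (Finset.mem_univ ρ)
    omega

lemma nwd_union {X : Type*} [TopologicalSpace X] {s t : Set X} (hs : IsClosed s)
    (hsn : interior s = ∅) (htn : interior t = ∅) : interior (s ∪ t) = ∅ := by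
  by_contra h
  rcases nonempty_iff_ne_empty.2 h with ⟨x, hx⟩
  have hU : IsOpen (interior (s ∪ t)) := isOpen_interior
  have hsub : interior (s ∪ t) ⊆ s ∪ t := interior_subset
  have h2 : interior (s ∪ t) ∩ sᶜ ⊆ t := fun y hy => (hsub hy.1).resolve_left hy.2
  rcases Set.eq_empty_or_nonempty (interior (s ∪ t) ∩ sᶜ) with he | ⟨y, hy⟩
  · have hss : interior (s ∪ t) ⊆ s := by
      intro y hy
      by_contra hns
      exact absurd he (Set.nonempty_iff_ne_empty.1 ⟨y, hy, hns⟩)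
    have : x ∈ interior s := interior_maximal hss hU hx
    simp [hsn] at this
  · have : y ∈ interior t := interior_maximal h2 (hU.inter hs.isOpen_compl) hy
    simp [htn] at this

def patchSeq (l : ℕ → ℕ) (K : ℕ → Bool) (τ : ℕ → (ℕ → Bool) → (ℕ → Bool))
    (x0 : ℕ → Bool) : ℕ → ℕ → Bool
  | 0 => x0
  | (k+1) => fun i => if K k = true ∧ l k ≤ i ∧ i < l (k+1) then τ k (patchSeq l K τ x0 k) i
             else patchSeq l K τ x0 k i

lemma patchSeq_succ (l : ℕ → ℕ) (K : ℕ → Bool) (τ : ℕ → (ℕ → Bool) → (ℕ → Bool))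
    (x0 : ℕ → Bool) (k i : ℕ) :
    patchSeq l K τ x0 (k+1) i = if K k = true ∧ l k ≤ i ∧ i < l (k+1)
      then τ k (patchSeq l K τ x0 k) i else patchSeq l K τ x0 k i := rfl

lemma patchSeq_stable {l : ℕ → ℕ} (hl : Monotone l) (K : ℕ → Bool)
    (τ : ℕ → (ℕ → Bool) → (ℕ → Bool))
    (x0 : ℕ → Bool) {k k' : ℕ} (hk : k ≤ k') {i : ℕ} (hi : i < l k) :
    patchSeq l K τ x0 k' i = patchSeq l K τ x0 k i := by
  induction k' , hk using Nat.le_induction with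
  | base => rfl
  | succ k' hkk' ih =>
      have h : ¬ (K k' = true ∧ l k' ≤ i ∧ i < l (k'+1)) := by
        rintro ⟨-, h2, -⟩
        exact absurd (lt_of_lt_of_le hi (hl hkk')) (not_lt.2 h2)
      rw [patchSeq_succ, if_neg h, ih]

/-- Talagrand: a meagre filter admits an interval partition each member meets a.e. -/
lemma talagrand_of_meagre {F : Set (Set ℕ)} (hF : IsFilterOn F)
    (hmea : IsMeagre (cantorCopy F)) :
    ∃ l : ℕ → ℕ, StrictMono l ∧
      ∀ X ∈ F, {k | X ∩ Set.Ico (l k) (l (k + 1)) = ∅}.Finite := by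
  classical
  obtain ⟨S, hSnwd, hScnt, hScov⟩ := isMeagre_iff_countable_union_isNowhereDense.1 hmea
  obtain ⟨f, hf⟩ := (hScnt.insert ∅).exists_eq_range (insert_nonempty _ _)
  have hfnwd : ∀ n, IsNowhereDense (f n) := by
    intro n
    have : f n ∈ insert ∅ S := hf ▸ mem_range_self n
    rcases this with h | h
    · rw [h]; exact isNowhereDense_empty
    · exact hSnwd _ h
  set g : ℕ → Set (ℕ → Bool) := fun k => ⋃ i ∈ Finset.range (k + 1), closure (f i) with hg
  have hgc : ∀ k, IsClosed (g k) := fun k =>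
    (Finset.range (k + 1)).finite_toSet.isClosed_biUnion fun i _ => isClosed_closure
  have hgsucc : ∀ k, g (k + 1) = g k ∪ closure (f (k + 1)) := by
    intro k
    ext x
    simp only [hg, mem_iUnion, Finset.mem_range, mem_union]
    constructor
    · rintro ⟨i, hi, hx⟩
      rcases Nat.lt_succ_iff_lt_or_eq.1 hi with h | h
      · exact Or.inl ⟨i, h, hx⟩
      · subst h; exact Or.inr hx
    · rintro (⟨i, hi, hx⟩ | hx)
      · exact ⟨i, by omega, hx⟩
      · exact ⟨k + 1, by omega, hx⟩
  have hgn : ∀ k, interior (g k) = ∅ := by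
    intro k
    induction k with
    | zero => rw [show g 0 = closure (f 0) by simp [g]]; exact hfnwd 0
    | succ k ih =>
        rw [hgsucc k]
        exact nwd_union (hgc k) ih (hfnwd (k + 1))
  have hgmono : ∀ {j k}, j ≤ k → g j ⊆ g k := by
    intro j k hjk x hx
    simp only [hg, mem_iUnion, Finset.mem_range] at hx ⊢
    obtain ⟨i, hi, hxi⟩ := hx
    exact ⟨i, by omega, hxi⟩
  have hcov : cantorCopy F ⊆ ⋃ k, g k := by
    intro x hx
    obtain ⟨t, htS, hxt⟩ := hScov hx
    have : t ∈ range f := hf ▸ mem_insert_of_mem _ htS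
    obtain ⟨i, rfl⟩ := this
    refine mem_iUnion.2 ⟨i, ?_⟩
    simp only [hg, mem_iUnion, Finset.mem_range]
    exact ⟨i, Nat.lt_succ_self i, subset_closure hxt⟩
  choose m hm hτ using fun (k n : ℕ) => nwd_ext_all (hgc k) (hgn k) n
  set l : ℕ → ℕ := fun k => Nat.rec 0 (fun k ih => m k ih) k with hldef
  have hlsucc : ∀ k, l (k + 1) = m k (l k) := fun k => rfl
  have hlmono : StrictMono l := strictMono_nat_of_lt_succ fun k => (hm k (l k))
  refine ⟨l, hlmono, ?_⟩
  intro X hX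
  by_contra hinf
  rw [← Set.not_infinite, not_not] at hinf
  set K := {k | X ∩ Set.Ico (l k) (l (k + 1)) = ∅} with hK
  set Kb : ℕ → Bool := fun k => decide (k ∈ K) with hKbdef
  have hKb : ∀ k, Kb k = true ↔ k ∈ K := fun k => decide_eq_true_iff
  -- the patching functions
  set τf : ℕ → (ℕ → Bool) → (ℕ → Bool) := fun k σ => Classical.choose (hτ k (l k) σ) with hτf
  have hτf1 : ∀ k σ, ∀ i < l k, τf k σ i = σ i := fun k σ =>
    (Classical.choose_spec (hτ k (l k) σ)).1
  have hτf2 : ∀ k σ y, (∀ i < m k (l k), y i = τf k σ i) → y ∉ g k := fun k σ =>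
    (Classical.choose_spec (hτ k (l k) σ)).2
  set G : ℕ → ℕ → Bool := patchSeq l Kb τf (fun i => decide (i ∈ X)) with hG
  set Y : ℕ → Bool := fun i => G (i + 1) i with hY
  -- Y agrees with G (k+1) below l (k+1)
  have hYG : ∀ k, ∀ i < l (k + 1), Y i = G (k + 1) i := by
    intro k i hi
    show G (i + 1) i = G (k + 1) i
    rcases le_or_gt (i + 1) (k + 1) with h | h
    · have hi1 : i < l (i + 1) := lt_of_lt_of_le (Nat.lt_succ_self i) hlmono.le_apply
      exact (patchSeq_stable hlmono.monotone Kb τf _ h hi1).symm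
    · exact patchSeq_stable hlmono.monotone Kb τf _ (Nat.le_of_lt h) hi
  -- X ⊆ toSet Y
  have hXY : X ⊆ toSet Y := by
    intro x hx
    have hall : ∀ k, G k x = true := by
      intro k
      induction k with
      | zero => simpa [hG, patchSeq] using hx
      | succ k ih =>
          show patchSeq l Kb τf _ (k + 1) x = true
          rw [patchSeq_succ]
          split
          · rename_i hcond
            have hkK : k ∈ K := (hKb k).1 hcond.1
            have hmem : x ∈ X ∩ Set.Ico (l k) (l (k + 1)) := ⟨hx, hcond.2.1, hcond.2.2⟩
            have hem : X ∩ Set.Ico (l k) (l (k + 1)) = ∅ := hkK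
            rw [hem] at hmem
            exact absurd hmem (notMem_empty x)
          · exact ih
    exact hall (x + 1)
  have hYF : Y ∈ cantorCopy F := hF.2.2.2 X (toSet Y) hX hXY
  -- Y avoids g k for k ∈ K
  have havoid : ∀ k ∈ K, Y ∉ g k := by
    intro k hk
    refine hτf2 k (G k) Y ?_
    intro i hi
    have hi' : i < l (k + 1) := by rw [hlsucc]; exact hi
    rw [hYG k i hi']
    show patchSeq l Kb τf _ (k + 1) i = τf k (G k) i
    rw [patchSeq_succ]
    split
    · rfl
    · rename_i hcond
      push_neg at hcond
      rcases le_or_gt (l k) i with h | h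
      · exact absurd hi' (by simpa using hcond ((hKb k).2 hk) h)
      · exact (hτf1 k (G k) i h).symm
  have : Y ∉ ⋃ k, g k := by
    rw [mem_iUnion]
    rintro ⟨j, hj⟩
    obtain ⟨k, hkK, hjk⟩ := hinf.exists_gt j
    exact havoid k hkK (hgmono hjk.le hj)
  exact this (hcov hYF)

/-- The union of the entries of a list of finsets. -/
def listU : List (Finset ℕ) → Finset ℕ
  | [] => ∅
  | a :: s => a ∪ listU s

lemma mem_listU {x : ℕ} {s : List (Finset ℕ)} : x ∈ listU s ↔ ∃ a ∈ s, x ∈ a := by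
  induction s with
  | nil => simp [listU]
  | cons a s ih => simp [listU, ih]

/-- The "protected interval index" of a node. -/
def prot (s : List (Finset ℕ)) : ℕ := (listU s).sup id + s.length + 1

lemma lt_prot {x : ℕ} {a : Finset ℕ} {s : List (Finset ℕ)} (ha : a ∈ s) (hx : x ∈ a) :
    x < prot s := by
  have : x ≤ (listU s).sup id := Finset.le_sup (f := id) (mem_listU.2 ⟨a, ha, hx⟩)
  unfold prot; omega

lemma prot_lt_concat (s : List (Finset ℕ)) (a : Finset ℕ) : prot s < prot (s ++ [a]) := by
  have hsub : listU s ⊆ listU (s ++ [a]) := fun x hx =>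
    mem_listU.2 (by rcases mem_listU.1 hx with ⟨c, hc, hxc⟩; exact ⟨c, by simp [hc], hxc⟩)
  have := Finset.sup_mono (f := id) hsub
  unfold prot
  simp only [List.length_append, List.length_singleton]
  omega

lemma ofFn_take {α : Type*} (b : ℕ → α) {m n : ℕ} (h : m ≤ n) :
    (List.ofFn (fun i : Fin n => b i.1)).take m = List.ofFn (fun i : Fin m => b i.1) := by
  apply List.ext_getElem
  · simp [h]
  · intro j h1 h2
    simp only [List.getElem_take, List.getElem_ofFn]

lemma ofFn_concat {α : Type*} (b : ℕ → α) (n : ℕ) :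
    List.ofFn (fun i : Fin (n + 1) => b i.1) =
      List.ofFn (fun i : Fin n => b i.1) ++ [b n] := by
  rw [List.ofFn_succ']
  simp [List.concat_eq_append]

lemma tree_of_partition {F : Set (Set ℕ)} (hFr : ExtendsFrechet F) (l : ℕ → ℕ)
    (hl : StrictMono l) :
    ∃ T : Set (List (Finset ℕ)), IsTree T ∧ IsFTree F T ∧
      ∀ b : ℕ → Finset ℕ, (∀ n, List.ofFn (fun i : Fin n => b i.1) ∈ T) →
        {k | (⋃ n, (b n : Set ℕ)) ∩ Set.Ico (l k) (l (k + 1)) = ∅}.Infinite := by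
  set T : Set (List (Finset ℕ)) := {s | ∀ (j : ℕ) (hj : j < s.length), ∀ i ≤ j,
    ∀ x ∈ s[j]'hj, ¬(l (prot (s.take i)) ≤ x ∧ x < l (prot (s.take i) + 1))} with hT
  have htree : IsTree T := by
    constructor
    · intro j hj; simp at hj
    · rintro s hs t ⟨r, rfl⟩ j hj i hij x hx
      have hjt : j < t.length := hj
      have h1 : (t ++ r)[j]'(by simp; omega) = t[j]'hjt := List.getElem_append_left hjt
      have h2 : (t ++ r).take i = t.take i := List.take_append_of_le_length (by omega)
      have := hs j (by simp; omega) i hij x (by rw [h1]; exact hx)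
      rwa [h2] at this
  have hftree : IsFTree F T := by
    intro s hs
    refine ⟨(⋃ i ∈ Finset.range (s.length + 1),
      Set.Ico (l (prot (s.take i))) (l (prot (s.take i) + 1)))ᶜ, ?_, ?_⟩
    · apply hFr
      rw [compl_compl]
      exact (Finset.range (s.length + 1)).finite_toSet.biUnion fun i _ => Set.finite_Ico _ _
    · intro a ha
      intro j hj i hij x hx
      simp only [List.length_append, List.length_singleton] at hj
      have htake : (s ++ [a]).take i = s.take i := by
        apply List.take_append_of_le_length
        omega
      rw [htake]
      rcases Nat.lt_succ_iff_lt_or_eq.1 hj with h | h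
      · have h1 : (s ++ [a])[j]'(by simp; omega) = s[j]'h := List.getElem_append_left h
        rw [h1] at hx
        exact hs j h i (by omega) x hx
      · subst h
        have h1 : (s ++ [a])[s.length]'(by simp) = a := List.getElem_concat_length rfl _
        rw [h1] at hx
        have := ha hx
        rw [mem_compl_iff] at this
        intro hcon
        apply this
        simp only [mem_iUnion, Finset.mem_range]
        exact ⟨i, by omega, hcon.1, hcon.2⟩
  refine ⟨T, htree, hftree, ?_⟩
  intro b hb
  set p : ℕ → List (Finset ℕ) := fun n => List.ofFn (fun i : Fin n => b i.1) with hp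
  have hplen : ∀ n, (p n).length = n := fun n => by simp [hp]
  have hpget : ∀ n j (h : j < n), (p n)[j]'(by rw [hplen]; exact h) = b j := by
    intro n j h
    simp [hp]
  have hptake : ∀ {i n : ℕ}, i ≤ n → (p n).take i = p i := fun h => ofFn_take b h
  have hpsucc : ∀ n, p (n + 1) = p n ++ [b n] := fun n => ofFn_concat b n
  have hκmono : StrictMono (fun n => prot (p n)) := by
    apply strictMono_nat_of_lt_succ
    intro n
    rw [hpsucc n]
    exact prot_lt_concat _ _
  apply Set.infinite_of_injective_forall_mem (f := fun n => prot (p n)) hκmono.injective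
  intro n
  simp only [mem_setOf_eq]
  rw [eq_empty_iff_forall_notMem]
  rintro x ⟨hxU, hxI⟩
  obtain ⟨j, hxj⟩ : ∃ j, x ∈ b j := by
    simpa using hxU
  rcases le_or_gt n j with h | h
  · -- use membership p (j+1) ∈ T at index j with i = n
    have hmem := hb (j + 1) j (by rw [hplen]; omega) n (by omega) x
      (by rw [hpget (j+1) j (by omega)]; exact hxj)
    rw [hptake (by omega : n ≤ j + 1)] at hmem
    exact hmem ⟨hxI.1, hxI.2⟩
  · -- x is an element of an earlier block, hence small
    have hxlt : x < prot (p n) := lt_prot (a := b j) (by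
      rw [hp]; exact List.mem_ofFn.2 ⟨⟨j, h⟩, rfl⟩) hxj
    have : prot (p n) ≤ l (prot (p n)) := hl.le_apply
    exact absurd hxI.1 (by omega)

lemma pfilter_of_tree {F : Set (Set ℕ)} (hF : IsFilterOn F)
    (htree : ∀ T : Set (List (Finset ℕ)), IsTree T → IsFTree F T →
      ∃ b : ℕ → Finset ℕ, (∀ n : ℕ, List.ofFn (fun i : Fin n => b i.1) ∈ T) ∧
        (⋃ n : ℕ, (b n : Set ℕ)) ∈ F) :
    IsPFilterOn F := by
  intro X hX
  set Z : ℕ → Set ℕ := fun n => Nat.rec (X 0) (fun n ih => ih ∩ X (n + 1)) n with hZ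
  have hZF : ∀ n, Z n ∈ F := by
    intro n
    induction n with
    | zero => exact hX 0
    | succ n ih => exact hF.2.2.1 _ _ ih (hX (n + 1))
  have hZsub : ∀ {i n : ℕ}, i ≤ n → Z n ⊆ X i := by
    intro i n hin
    induction n with
    | zero => rw [Nat.le_zero.1 hin]; exact fun x hx => hx
    | succ n ih =>
        rcases Nat.lt_succ_iff_lt_or_eq.1 (by omega : i < n + 2) with h | h
        · exact fun x hx => ih (by omega) hx.1
        · subst h; exact fun x hx => hx.2
  set T : Set (List (Finset ℕ)) := {s | ∀ (j : ℕ) (hj : j < s.length), ↑(s[j]'hj) ⊆ Z j} with hT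
  have htr : IsTree T := by
    constructor
    · intro j hj; simp at hj
    · rintro s hs t ⟨r, rfl⟩ j hj
      have hjt : j < t.length := hj
      have h1 : (t ++ r)[j]'(by simp; omega) = t[j]'hjt := List.getElem_append_left hjt
      rw [← h1]
      exact hs j (by simp; omega)
  have hftr : IsFTree F T := by
    intro s hs
    refine ⟨Z s.length, hZF _, ?_⟩
    intro a ha j hj
    simp only [List.length_append, List.length_singleton] at hj
    rcases Nat.lt_succ_iff_lt_or_eq.1 hj with h | h
    · have h1 : (s ++ [a])[j]'(by simp; omega) = s[j]'h := List.getElem_append_left h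
      rw [h1]
      exact hs j h
    · subst h
      have h1 : (s ++ [a])[s.length]'(by simp) = a := List.getElem_concat_length rfl _
      rw [h1]
      exact ha
  obtain ⟨b, hb, hbU⟩ := htree T htr hftr
  refine ⟨⋃ n, (b n : Set ℕ), hbU, ?_⟩
  intro n
  apply Set.Finite.subset (Set.Finite.biUnion (Finset.range n).finite_toSet
    (fun i _ => (b i : Set ℕ).toFinite))
  rintro x ⟨hxU, hxn⟩
  obtain ⟨j, hxj⟩ : ∃ j, x ∈ b j := by simpa using hxU
  rcases lt_or_ge j n with h | h
  · exact mem_biUnion (by simpa using h) hxj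
  · exfalso
    apply hxn
    have hmem := hb (j + 1) j (by simp)
    have : ↑((List.ofFn (fun i : Fin (j+1) => b i.1))[j]'(by simp)) ⊆ Z j := hmem
    rw [List.getElem_ofFn] at this
    exact hZsub h (this hxj)

/-- If the filter is non-meagre then for every interval partition some member misses
infinitely many intervals. -/
lemma exists_miss {F : Set (Set ℕ)} (hnm : ¬ IsMeagre (cantorCopy F))
    {l : ℕ → ℕ} (hl : StrictMono l) :
    ∃ Y ∈ F, {k | Y ∩ Set.Ico (l k) (l (k + 1)) = ∅}.Infinite := by
  by_contra h
  push_neg at h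
  apply hnm
  rw [isMeagre_iff_countable_union_isNowhereDense]
  set C : ℕ → Set (ℕ → Bool) :=
    fun m => {x | ∀ k, m ≤ k → ∃ i, l k ≤ i ∧ i < l (k + 1) ∧ x i = true} with hC
  refine ⟨range C, ?_, countable_range C, ?_⟩
  · rintro t ⟨m, rfl⟩
    have hclosed : IsClosed (C m) := by
      have heq : C m = ⋂ (k : ℕ), ⋂ (_ : m ≤ k),
          (⋃ i ∈ Finset.Ico (l k) (l (k + 1)), {x : ℕ → Bool | x i = true}) := by
        ext x
        simp [hC, and_assoc]
      rw [heq]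
      refine isClosed_iInter fun k => isClosed_iInter fun _ => ?_
      refine (Finset.Ico (l k) (l (k + 1))).finite_toSet.isClosed_biUnion fun i _ => ?_
      have heq2 : {x : ℕ → Bool | x i = true} = (fun p : ℕ → Bool => p i) ⁻¹' {true} := rfl
      rw [heq2]
      exact IsClosed.preimage (continuous_apply i) (isClosed_discrete _)
    rw [hclosed.isNowhereDense_iff]
    rw [eq_empty_iff_forall_notMem]
    intro x hx
    obtain ⟨n, hn⟩ := exists_cyl_subset isOpen_interior hx
    set y : ℕ → Bool := fun i => if i < n then x i else false with hy
    have hyC : y ∈ C m := interior_subset (hn fun i hi => by simp [hy, hi])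
    obtain ⟨i, hi1, hi2, hi3⟩ := hyC (max m n) (le_max_left _ _)
    have hni : n ≤ i := le_trans (le_trans (le_max_right m n) hl.le_apply) hi1
    have hfalse : y i = false := by rw [hy]; simp [Nat.not_lt.2 hni]
    rw [hfalse] at hi3
    exact Bool.false_ne_true hi3
  · intro x hx
    have hfin : {k | toSet x ∩ Set.Ico (l k) (l (k + 1)) = ∅}.Finite := by
      rw [← Set.not_infinite]
      exact Set.not_infinite.2 (h (toSet x) hx)
    obtain ⟨m, hm⟩ := hfin.bddAbove
    refine mem_sUnion.2 ⟨C (m + 1), mem_range_self _, ?_⟩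
    intro k hk
    have hknot : k ∉ {k | toSet x ∩ Set.Ico (l k) (l (k + 1)) = ∅} := by
      intro hkK
      have := hm hkK
      omega
    have hne : (toSet x ∩ Set.Ico (l k) (l (k + 1))).Nonempty :=
      nonempty_iff_ne_empty.2 hknot
    obtain ⟨i, hi1, hi2, hi3⟩ := hne
    exact ⟨i, hi2, hi3, hi1⟩

/-- Lists of a given length with entries from a finset. -/
def listsOf (S : Finset (Finset ℕ)) : ℕ → Finset (List (Finset ℕ))
  | 0 => {[]}
  | (j + 1) => Finset.image₂ List.cons S (listsOf S j)

lemma mem_listsOf {S : Finset (Finset ℕ)} {j : ℕ} {t : List (Finset ℕ)} :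
    t ∈ listsOf S j ↔ t.length = j ∧ ∀ a ∈ t, a ∈ S := by
  induction j generalizing t with
  | zero =>
      simp only [listsOf, Finset.mem_singleton]
      constructor
      · rintro rfl; simp
      · rintro ⟨hlen, -⟩; exact List.length_eq_zero_iff.1 hlen
  | succ j ih =>
      simp only [listsOf, Finset.mem_image₂]
      constructor
      · rintro ⟨a, ha, t', ht', rfl⟩
        obtain ⟨hlen, hall⟩ := ih.1 ht'
        refine ⟨by simp [hlen], ?_⟩
        intro b hb
        rcases List.mem_cons.1 hb with rfl | hb
        · exact ha
        · exact hall b hb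
      · rintro ⟨hlen, hall⟩
        cases t with
        | nil => simp at hlen
        | cons a t' =>
            refine ⟨a, hall a (List.mem_cons_self), t', ih.2 ⟨by simpa using hlen, ?_⟩, rfl⟩
            exact fun b hb => hall b (List.mem_cons_of_mem a hb)

/-- Main lemma: a non-meagre P-filter has branches through every F-tree. -/
lemma branch_exists {F : Set (Set ℕ)} (hF : IsFilterOn F) (hFr : ExtendsFrechet F)
    (hPF : IsPFilterOn F) (hnm : ¬ IsMeagre (cantorCopy F))
    (T : Set (List (Finset ℕ))) (hTr : IsTree T) (hFT : IsFTree F T) :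
    ∃ b : ℕ → Finset ℕ,
      (∀ n : ℕ, List.ofFn (fun i : Fin n => b i.1) ∈ T) ∧
      (⋃ n : ℕ, (b n : Set ℕ)) ∈ F := by
  classical
  set W : List (Finset ℕ) → Set ℕ := fun s => if h : s ∈ T then (hFT s h).choose else Set.univ
    with hW
  have hWF : ∀ s, W s ∈ F := by
    intro s
    rw [hW]
    dsimp only
    split
    · exact (hFT s ‹_›).choose_spec.1
    · exact hF.1
  have hWeq : ∀ s (hs : s ∈ T), W s = (hFT s hs).choose := by
    intro s hs; rw [hW]; simp [hs]
  have hWext : ∀ s, s ∈ T → ∀ a : Finset ℕ, ↑a ⊆ W s → s ++ [a] ∈ T := by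
    intro s hs a ha
    rw [hWeq s hs] at ha
    exact (hFT s hs).choose_spec.2 a ha
  obtain ⟨e, he⟩ := exists_surjective_nat (List (Finset ℕ))
  obtain ⟨X, hXF, hXfin⟩ := hPF (fun n => W (e n)) (fun n => hWF (e n))
  have hXdiff : ∀ s, (X \ W s).Finite := by
    intro s; obtain ⟨n, rfl⟩ := he s; exact hXfin n
  set N : List (Finset ℕ) → ℕ := fun s => (hXdiff s).toFinset.sup id + 1 with hN
  have hNspec : ∀ s, ∀ x ∈ X, N s ≤ x → x ∈ W s := by
    intro s x hx hNx
    by_contra hxW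
    have h1 : x ∈ (hXdiff s).toFinset := (hXdiff s).mem_toFinset.2 ⟨hx, hxW⟩
    have h2 : x ≤ (hXdiff s).toFinset.sup id := Finset.le_sup (f := id) h1
    rw [hN] at hNx
    dsimp only at hNx
    omega
  -- the interval endpoints
  set l : ℕ → ℕ := fun k => Nat.rec 0 (fun k ih =>
      ih + 1 + ((Finset.range (k + 1)).biUnion
        (listsOf ((Finset.range ih).powerset))).sup N) k with hl
  have hlsucc : ∀ k, l (k + 1) = l k + 1 + ((Finset.range (k + 1)).biUnion
      (listsOf ((Finset.range (l k)).powerset))).sup N := fun k => rfl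
  have hlmono : StrictMono l := strictMono_nat_of_lt_succ (by
    intro k; rw [hlsucc]; omega)
  have hNl : ∀ k (s : List (Finset ℕ)), s.length ≤ k →
      (∀ a ∈ s, ∀ x ∈ a, x < l k) → N s < l (k + 1) := by
    intro k s hlen hmem
    have hsmem : s ∈ (Finset.range (k + 1)).biUnion
        (listsOf ((Finset.range (l k)).powerset)) := by
      rw [Finset.mem_biUnion]
      refine ⟨s.length, by simp; omega, mem_listsOf.2 ⟨rfl, fun a ha => ?_⟩⟩
      exact Finset.mem_powerset.2 fun x hx => Finset.mem_range.2 (hmem a ha x hx)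
    have := Finset.le_sup (f := N) hsmem
    rw [hlsucc]
    omega
  -- a member of F missing infinitely many intervals
  obtain ⟨Y, hYF, hYinf⟩ := exists_miss hnm hlmono
  have hex : ∀ a : ℕ, ∃ b, (Y ∩ Set.Ico (l b) (l (b + 1)) = ∅) ∧ a < b := by
    intro a
    obtain ⟨b, hb1, hb2⟩ := hYinf.exists_gt a
    exact ⟨b, hb1, hb2⟩
  set κ : ℕ → ℕ := fun j => Nat.rec (Classical.choose (hex 0))
    (fun _ ih => Classical.choose (hex ih)) j with hκ
  have hκ0 : Y ∩ Set.Ico (l (κ 0)) (l (κ 0 + 1)) = ∅ := (Classical.choose_spec (hex 0)).1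
  have hκsuccK : ∀ j, Y ∩ Set.Ico (l (κ (j + 1))) (l (κ (j + 1) + 1)) = ∅ := fun j =>
    (Classical.choose_spec (hex (κ j))).1
  have hκK : ∀ j, Y ∩ Set.Ico (l (κ j)) (l (κ j + 1)) = ∅ := by
    intro j
    cases j with
    | zero => exact hκ0
    | succ j => exact hκsuccK j
  have hκlt : ∀ j, κ j < κ (j + 1) := fun j => (Classical.choose_spec (hex (κ j))).2
  have hκmono : StrictMono κ := strictMono_nat_of_lt_succ hκlt
  -- the blocks
  have hcfin : ∀ j, (X ∩ Y ∩ Set.Ico (l (κ j)) (l (κ (j + 1)))).Finite := fun j =>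
    (Set.finite_Ico _ _).subset inter_subset_right
  set c : ℕ → Finset ℕ := fun j => (hcfin j).toFinset with hc
  have hcmem : ∀ j x, x ∈ c j ↔ x ∈ X ∧ x ∈ Y ∧ l (κ j) ≤ x ∧ x < l (κ (j + 1)) := by
    intro j x
    rw [hc]
    dsimp only
    rw [Set.Finite.mem_toFinset]
    exact ⟨fun ⟨⟨h1, h2⟩, h3, h4⟩ => ⟨h1, h2, h3, h4⟩,
      fun ⟨h1, h2, h3, h4⟩ => ⟨⟨h1, h2⟩, h3, h4⟩⟩
  set p : ℕ → List (Finset ℕ) := fun n => List.ofFn (fun i : Fin n => c i.1) with hp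
  have hpsucc : ∀ n, p (n + 1) = p n ++ [c n] := fun n => ofFn_concat c n
  have hplen : ∀ n, (p n).length = n := fun n => by simp [hp]
  have hpT : ∀ n, p n ∈ T := by
    intro n
    induction n with
    | zero =>
        have h0 : p 0 = [] := by simp [hp]
        rw [h0]
        exact hTr.1
    | succ n ih =>
        rw [hpsucc]
        apply hWext (p n) ih (c n)
        intro x hx
        obtain ⟨hxX, hxY, hx1, hx2⟩ := (hcmem n x).1 hx
        have hxge : l (κ n + 1) ≤ x := by
          by_contra hlt
          have hmem : x ∈ Y ∩ Set.Ico (l (κ n)) (l (κ n + 1)) := ⟨hxY, hx1, by omega⟩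
          rw [hκK n] at hmem
          exact hmem
        have hNp : N (p n) < l (κ n + 1) := by
          apply hNl (κ n) (p n) (by rw [hplen]; exact hκmono.le_apply)
          intro a ha x' hx'
          obtain ⟨i, rfl⟩ := List.mem_ofFn.1 (by rw [hp] at ha; exact ha)
          obtain ⟨-, -, -, hx'2⟩ := (hcmem i x').1 hx'
          have hin : i.1 + 1 ≤ n := i.isLt
          have hle : κ (i.1 + 1) ≤ κ n := hκmono.monotone hin
          have h2 : l (κ (i.1 + 1)) ≤ l (κ n) := hlmono.monotone hle
          omega
        exact hNspec (p n) x hxX (by omega)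
  refine ⟨c, fun n => hpT n, ?_⟩
  have hZF : (X ∩ Y) \ Set.Ico 0 (l (κ 0)) ∈ F := by
    have h1 : X ∩ Y ∈ F := hF.2.2.1 _ _ hXF hYF
    have h2 : (Set.Ico 0 (l (κ 0)) : Set ℕ)ᶜ ∈ F :=
      hFr _ (by rw [compl_compl]; exact Set.finite_Ico _ _)
    rw [Set.diff_eq]
    exact hF.2.2.1 _ _ h1 h2
  apply hF.2.2.2 _ _ hZF
  rintro x ⟨⟨hxX, hxY⟩, hxge⟩
  have hxge' : l (κ 0) ≤ x := by
    simp only [Set.mem_Ico] at hxge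
    omega
  have hQ : ∃ j, x < l (κ (j + 1)) := by
    refine ⟨x, ?_⟩
    have h5 : x + 1 ≤ l (κ (x + 1)) := (hlmono.comp hκmono).le_apply
    omega
  have hj2 : x < l (κ (Nat.find hQ + 1)) := Nat.find_spec hQ
  have hj1 : l (κ (Nat.find hQ)) ≤ x := by
    rcases Nat.eq_zero_or_pos (Nat.find hQ) with h | h
    · rw [h]; exact hxge'
    · have hmin := Nat.find_min hQ (show Nat.find hQ - 1 < Nat.find hQ by omega)
      have : Nat.find hQ - 1 + 1 = Nat.find hQ := by omega
      rw [this] at hmin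
      omega
  exact mem_iUnion.2 ⟨Nat.find hQ, Finset.mem_coe.2 ((hcmem (Nat.find hQ) x).2
    ⟨hxX, hxY, hj1, hj2⟩)⟩

/-- A filter `F` extending the Fréchet filter is a non-meager P-filter iff every
`F`-tree of finite sets has a branch whose union belongs to `F`. -/
theorem stmt11 (F : Set (Set ℕ)) (hF : IsFilterOn F) (hFr : ExtendsFrechet F) :
    (IsPFilterOn F ∧ NonMeagerFamily F) ↔
      ∀ T : Set (List (Finset ℕ)), IsTree T → IsFTree F T →
        ∃ b : ℕ → Finset ℕ,
          (∀ n : ℕ, List.ofFn (fun i : Fin n => b i.1) ∈ T) ∧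
          (⋃ n : ℕ, (b n : Set ℕ)) ∈ F := by
  constructor
  · rintro ⟨hPF, hnm⟩ T hTr hFT
    exact branch_exists hF hFr hPF hnm T hTr hFT
  · intro htree
    refine ⟨pfilter_of_tree hF htree, ?_⟩
    intro hmea
    obtain ⟨l, hlmono, hmiss⟩ := talagrand_of_meagre hF hmea
    obtain ⟨T, hTr, hFT, hbad⟩ := tree_of_partition hFr l hlmono
    obtain ⟨b, hb, hbF⟩ := htree T hTr hFT
    exact (hbad b hb) (hmiss _ hbF)
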